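/- Let (X, 𝒰) be a uniform space and f : X → X continuous. If the Zadeh extension f̂ : (ℱ(X), 𝒰_S) → (ℱ(X), 𝒰_S) is topologically transitive with respect to the sendograph uniformity, then the induced map f̄ : 𝒦(X) → 𝒦(X), K ↦ f(K), is topologically transitive with respect to the Vietoris topology. -/

import Mathlib

open Set Filter Topology
open scoped Uniformity

/-- The α-cut of a fuzzy set: `{x | α ≤ u x}` for `α ≠ 0`, and the support
(closure of `{x | 0 < u x}`) for `α = 0`. -/
noncomputable def fuzzyCut {X : Type*} [TopologicalSpace X] (u : X → ℝ) (α : ℝ) : Set X :=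
  if α = 0 then closure {x | 0 < u x} else {x | α ≤ u x}

/-- `u` belongs to `ℱ(X)`: a normal upper semicontinuous `[0,1]`-valued fuzzy set
with compact support. -/
structure IsFuzzySet {X : Type*} [TopologicalSpace X] (u : X → ℝ) : Prop where
  mem_Icc : ∀ x, u x ∈ Set.Icc (0:ℝ) 1
  usc : UpperSemicontinuous u
  normal : ∃ x, u x = 1
  compact_supp : IsCompact (closure {x | 0 < u x})

/-- The Zadeh extension of `f`: `x ↦ sup {u z : f z = x}` (and `0` when the
preimage is empty, since `sSup ∅ = 0` in `ℝ`). -/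
noncomputable def zadeh {X : Type*} (f : X → X) (u : X → ℝ) : X → ℝ :=
  fun x => sSup (u '' (f ⁻¹' {x}))

/-- `W(A) = ⋃ a ∈ A, W(a)` where `W(a) = {y | (a, y) ∈ W}`. -/
def ballImage {Y : Type*} (W : Set (Y × Y)) (A : Set Y) : Set Y :=
  {y | ∃ a ∈ A, (a, y) ∈ W}

/-- The Hausdorff entourage relation `𝒦[W]`: `(A,B) ∈ 𝒦[W]` iff `A ⊆ W(B)` and `B ⊆ W(A)`. -/
def KRel {Y : Type*} (W : Set (Y × Y)) (A B : Set Y) : Prop :=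
  A ⊆ ballImage W B ∧ B ⊆ ballImage W A

/-- The level-wise entourage relation `ℱ[W]`: `(u_α, v_α) ∈ 𝒦[W]` for all `α ∈ [0,1]`. -/
def FRel {X : Type*} [TopologicalSpace X] (W : Set (X × X)) (u v : X → ℝ) : Prop :=
  ∀ α ∈ Set.Icc (0:ℝ) 1, KRel W (fuzzyCut u α) (fuzzyCut v α)

/-- The Skorokhod entourage relation `G[W, ε]`: there is an increasing homeomorphism `t`
of `[0,1]` with `‖t‖ < ε` and `(u_α, v_{t α}) ∈ 𝒦[W]` for all `α ∈ [0,1]`. -/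
def SkoRel {X : Type*} [TopologicalSpace X] (W : Set (X × X)) (ε : ℝ) (u v : X → ℝ) : Prop :=
  ∃ t : ℝ → ℝ, StrictMonoOn t (Set.Icc 0 1) ∧ t 0 = 0 ∧ t 1 = 1 ∧
    Set.MapsTo t (Set.Icc 0 1) (Set.Icc 0 1) ∧ Set.SurjOn t (Set.Icc 0 1) (Set.Icc 0 1) ∧
    (∀ α ∈ Set.Icc (0:ℝ) 1, |t α - α| < ε) ∧
    (∀ α ∈ Set.Icc (0:ℝ) 1, KRel W (fuzzyCut u α) (fuzzyCut v (t α)))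

/-- The sendograph of `u`: `end(u) ∩ (u₀ × [0,1])`. -/
noncomputable def send {X : Type*} [TopologicalSpace X] (u : X → ℝ) : Set (X × ℝ) :=
  {p | p.1 ∈ fuzzyCut u 0 ∧ p.2 ∈ Set.Icc (0:ℝ) 1 ∧ p.2 ≤ u p.1}

/-- The product entourage `U × V_ε` on `X × [0,1]`. -/
def prodEnt {X : Type*} (U : Set (X × X)) (ε : ℝ) : Set ((X × ℝ) × (X × ℝ)) :=
  {p | (p.1.1, p.2.1) ∈ U ∧ |p.1.2 - p.2.2| < ε}

/-- The sendograph entourage relation `S[U, ε]`. -/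
noncomputable def SendRel {X : Type*} [TopologicalSpace X] (U : Set (X × X)) (ε : ℝ)
    (u v : X → ℝ) : Prop :=
  KRel (prodEnt U ε) (send u) (send v)

/-- `u_{α⁺} = closure (⋃ β ∈ (α, 1], u_β)`, the right limit of the level map. -/
noncomputable def cutPlus {X : Type*} [TopologicalSpace X] (u : X → ℝ) (α : ℝ) : Set X :=
  closure (⋃ β ∈ Set.Ioc α 1, fuzzyCut u β)

/-- `B` belongs to the Vietoris basic open set `⟨V 0, …, V (k-1)⟩`. -/
def inVietoris {Y : Type*} (B : Set Y) (k : ℕ) (V : Fin k → Set Y) : Prop :=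
  B ⊆ (⋃ i, V i) ∧ ∀ i, (B ∩ V i).Nonempty


lemma ballImage_mono {Y : Type*} {W W' : Set (Y × Y)} {A A' : Set Y}
    (hW : W ⊆ W') (hA : A ⊆ A') : ballImage W A ⊆ ballImage W' A' :=
  fun _ ⟨a, ha, hw⟩ => ⟨a, hA ha, hW hw⟩

lemma ballImage_ballImage {Y : Type*} {W W' : Set (Y × Y)} (A : Set Y) :
    ballImage W' (ballImage W A) ⊆ ballImage (SetRel.comp W W') A := by
  rintro y ⟨b, ⟨a, ha, hab⟩, hby⟩
  exact ⟨a, ha, b, hab, hby⟩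

lemma closure_subset_ballImage {X : Type*} [UniformSpace X] {W : Set (X × X)}
    (hW : W ∈ 𝓤 X) (hsymm : SetRel.IsSymm W) (S : Set X) :
    closure S ⊆ ballImage W S := by
  intro x hx
  obtain ⟨s, hs1, hs2⟩ := UniformSpace.mem_closure_iff_ball.1 hx hW
  exact ⟨s, hs2, hsymm.symm _ _ hs1⟩

lemma zadeh_mem_Icc {X : Type*} {f : X → X} {w : X → ℝ}
    (hw : ∀ x, w x ∈ Set.Icc (0:ℝ) 1) : ∀ x, zadeh f w x ∈ Set.Icc (0:ℝ) 1 := by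
  intro x
  unfold zadeh
  rcases (w '' (f ⁻¹' {x})).eq_empty_or_nonempty with h | h
  · simp [h]
  · constructor
    · obtain ⟨a, ha⟩ := h
      refine le_trans ?_ (le_csSup ⟨1, ?_⟩ ha)
      · obtain ⟨z, _, rfl⟩ := ha; exact (hw z).1
      · rintro b ⟨z, _, rfl⟩; exact (hw z).2
    · exact csSup_le h (by rintro b ⟨z, _, rfl⟩; exact (hw z).2)

lemma zadeh_pos_set {X : Type*} {f : X → X} {w : X → ℝ}
    (hw : ∀ x, w x ∈ Set.Icc (0:ℝ) 1) :
    {x | 0 < zadeh f w x} = f '' {x | 0 < w x} := by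
  ext x
  simp only [mem_setOf_eq, mem_image, zadeh]
  constructor
  · intro hx
    by_contra h
    push_neg at h
    have : ∀ b ∈ w '' (f ⁻¹' {x}), b ≤ 0 := by
      rintro b ⟨z, hz, rfl⟩
      rcases lt_or_ge 0 (w z) with h' | h'
      · exact absurd hz.symm (fun e => (h z h').elim (e ▸ rfl) )
      · exact h'
    rcases (w '' (f ⁻¹' {x})).eq_empty_or_nonempty with he | hne
    · rw [he] at hx; simp [Real.sSup_empty] at hx
    · exact absurd hx (not_lt.2 (csSup_le hne this))
  · rintro ⟨z, hz, rfl⟩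
    have : w z ≤ sSup (w '' (f ⁻¹' {f z})) := by
      refine le_csSup ⟨1, ?_⟩ ⟨z, rfl, rfl⟩
      rintro b ⟨y, _, rfl⟩; exact (hw y).2
    linarith


lemma zadeh_iter_pos_set {X : Type*} {f : X → X} {w : X → ℝ}
    (hw : ∀ x, w x ∈ Set.Icc (0:ℝ) 1) (n : ℕ) :
    (∀ x, (zadeh f)^[n] w x ∈ Set.Icc (0:ℝ) 1) ∧
      {x | 0 < (zadeh f)^[n] w x} = f^[n] '' {x | 0 < w x} := by
  induction n with
  | zero => simpa using hw
  | succ n ih =>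
    rw [Function.iterate_succ_apply']
    refine ⟨zadeh_mem_Icc ih.1, ?_⟩
    rw [zadeh_pos_set ih.1, ih.2, ← Set.image_comp, ← Function.iterate_succ']

lemma fuzzyCut_zero {X : Type*} [TopologicalSpace X] (u : X → ℝ) :
    fuzzyCut u 0 = closure {x | 0 < u x} := if_pos rfl

lemma sendRel_to_kRel {X : Type*} [TopologicalSpace X] {W : Set (X × X)} {ε : ℝ}
    {u v : X → ℝ} (hu : ∀ x, 0 ≤ u x) (hv : ∀ x, 0 ≤ v x)
    (h : SendRel W ε u v) : KRel W (fuzzyCut u 0) (fuzzyCut v 0) := by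
  constructor
  · intro x hx
    obtain ⟨⟨y, β⟩, hyv, hrel⟩ :=
      h.1 (show ((x, (0:ℝ))) ∈ send u from ⟨hx, ⟨le_rfl, zero_le_one⟩, hu x⟩)
    exact ⟨y, hyv.1, hrel.1⟩
  · intro y hy
    obtain ⟨⟨x, β⟩, hxu, hrel⟩ :=
      h.2 (show ((y, (0:ℝ))) ∈ send v from ⟨hy, ⟨le_rfl, zero_le_one⟩, hv y⟩)
    exact ⟨x, hxu.1, hrel.1⟩

lemma indicator_pos_set {X : Type*} [TopologicalSpace X] (K : Set X) :
    {x | 0 < (closure K).indicator (fun _ => (1:ℝ)) x} = closure K := by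
  ext x
  by_cases hx : x ∈ closure K <;> simp [Set.indicator_apply, hx]

lemma isFuzzySet_indicator {X : Type*} [UniformSpace X] {K : Set X}
    (hK : IsCompact K) (hne : K.Nonempty) :
    IsFuzzySet ((closure K).indicator (fun _ => (1:ℝ))) := by
  constructor
  · intro x
    by_cases hx : x ∈ closure K <;> simp [Set.indicator_apply, hx]
  · exact isClosed_closure.upperSemicontinuous_indicator zero_le_one
  · obtain ⟨x, hx⟩ := hne
    exact ⟨x, Set.indicator_of_mem (subset_closure hx) _⟩
  · rw [indicator_pos_set, closure_closure]
    exact hK.closure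

lemma indicator_cut_zero {X : Type*} [TopologicalSpace X] (K : Set X) :
    fuzzyCut ((closure K).indicator (fun _ => (1:ℝ))) 0 = closure K := by
  rw [fuzzyCut_zero, indicator_pos_set, closure_closure]


/-- If the Zadeh extension is topologically transitive on `(ℱ(X), 𝒰_S)` (stated via basic
sendograph balls), then the induced map `K ↦ f(K)` is topologically transitive on the
hyperspace of nonempty compact subsets (stated via basic Hausdorff-uniformity balls). -/
theorem stmt15 {X : Type*} [UniformSpace X] {f : X → X} (hf : Continuous f)
    (htrans : ∀ u v : X → ℝ, IsFuzzySet u → IsFuzzySet v →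
      ∀ U ∈ 𝓤 X, ∀ V ∈ 𝓤 X, ∀ ε > (0:ℝ), ∀ δ > (0:ℝ),
      ∃ n : ℕ, 0 < n ∧ ∃ w : X → ℝ, IsFuzzySet w ∧ SendRel U ε u w ∧
        SendRel V δ v ((zadeh f)^[n] w)) :
    ∀ K L : Set X, IsCompact K → K.Nonempty → IsCompact L → L.Nonempty →
      ∀ U ∈ 𝓤 X, ∀ V ∈ 𝓤 X, ∃ n : ℕ, 0 < n ∧ ∃ A : Set X, IsCompact A ∧ A.Nonempty ∧
        KRel U K A ∧ KRel V L (f^[n] '' A) := by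
  intro K L hK hKne hL hLne U hU V hV
  obtain ⟨U', hU', hU'symm, hU'comp⟩ := comp_symm_mem_uniformity_sets hU
  obtain ⟨V', hV', hV'symm, hV'comp⟩ := comp_symm_mem_uniformity_sets hV
  have hU'sub : U' ⊆ U := (subset_comp_self_of_mem_uniformity hU').trans hU'comp
  have hV'sub : V' ⊆ V := (subset_comp_self_of_mem_uniformity hV').trans hV'comp
  set u := (closure K).indicator (fun _ => (1:ℝ)) with hu_def
  set v := (closure L).indicator (fun _ => (1:ℝ)) with hv_def
  obtain ⟨n, hn, w, hw, hsu, hsv⟩ := htrans u v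
    (isFuzzySet_indicator hK hKne) (isFuzzySet_indicator hL hLne)
    U' hU' V' hV' 1 one_pos 1 one_pos
  have hw01 : ∀ x, w x ∈ Set.Icc (0:ℝ) 1 := hw.mem_Icc
  have hiter := zadeh_iter_pos_set (f := f) hw01 n
  set S := {x | 0 < w x} with hS_def
  set A := closure S with hA_def
  have hAcut : fuzzyCut w 0 = A := fuzzyCut_zero w
  have hBcut : fuzzyCut ((zadeh f)^[n] w) 0 = closure (f^[n] '' S) := by
    rw [fuzzyCut_zero, hiter.2]
  -- level-0 Hausdorff relations from sendograph relations
  have hKA : KRel U' (closure K) A := by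
    have := sendRel_to_kRel (fun x => (isFuzzySet_indicator hK hKne).mem_Icc x |>.1)
      (fun x => (hw01 x).1) hsu
    rwa [indicator_cut_zero, hAcut] at this
  have hLB : KRel V' (closure L) (closure (f^[n] '' S)) := by
    have := sendRel_to_kRel (fun x => (isFuzzySet_indicator hL hLne).mem_Icc x |>.1)
      (fun x => (hiter.1 x).1) hsv
    rwa [indicator_cut_zero, hBcut] at this
  refine ⟨n, hn, A, hw.compact_supp, ?_, ?_, ?_⟩
  · obtain ⟨x, hx⟩ := hw.normal
    exact ⟨x, subset_closure (by simp [hS_def, hx])⟩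
  · constructor
    · exact (subset_closure.trans hKA.1).trans (ballImage_mono hU'sub subset_rfl)
    · refine (hKA.2.trans ?_)
      refine (ballImage_mono subset_rfl (closure_subset_ballImage hU' hU'symm K)).trans ?_
      exact (ballImage_ballImage K).trans (ballImage_mono hU'comp subset_rfl)
  · -- T = f^[n] '' A
    have hTsubB : f^[n] '' A ⊆ closure (f^[n] '' S) :=
      image_closure_subset_closure_image (hf.iterate n)
    have hBsubT : closure (f^[n] '' S) ⊆ ballImage V' (f^[n] '' A) := by
      refine (closure_subset_ballImage hV' hV'symm _).trans ?_
      exact ballImage_mono subset_rfl (Set.image_mono subset_closure)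
    constructor
    · refine (subset_closure.trans hLB.1).trans ?_
      refine (ballImage_mono subset_rfl hBsubT).trans ?_
      exact (ballImage_ballImage _).trans (ballImage_mono hV'comp subset_rfl)
    · refine (hTsubB.trans hLB.2).trans ?_
      refine (ballImage_mono subset_rfl (closure_subset_ballImage hV' hV'symm L)).trans ?_
      exact (ballImage_ballImage L).trans (ballImage_mono hV'comp subset_rfl)
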